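/- arXiv:1505.07886 — 4 statements merged into one kernel-verified Lean document; each statement's English description precedes it below -/
import Mathlib

section
/- Let φ ∈ GL(2,ℤ). Then b₁(Γ_{φ^r}) = 1 for all nonzero integers r if and only if φ is hyperbolic, where b₁(Γ_ψ) denotes the rank of the abelianization of F₂ ⋊_ψ ℤ. Concretely (using b₁(Γ_ψ) = 1 ⟺ 1 + det ψ ≠ tr ψ): for all r ≠ 0, 1 + det(φ^r) ≠ tr(φ^r), if and only if φ has infinite order and an eigenvalue of absolute value > 1. -/
open Matrix

lemma ch2 {R : Type*} [CommRing R] (A : Matrix (Fin 2) (Fin 2) R) :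
    A * A = A.trace • A - A.det • (1 : Matrix (Fin 2) (Fin 2) R) := by
  ext i j
  fin_cases i <;> fin_cases j <;>
    simp [Matrix.mul_apply, Fin.sum_univ_two, Matrix.trace_fin_two, Matrix.det_fin_two,
      Matrix.one_apply, Matrix.smul_apply, smul_eq_mul] <;> ring

lemma tradj2 {R : Type*} [CommRing R] (A : Matrix (Fin 2) (Fin 2) R) :
    (adjugate A).trace = A.trace := by
  simp [Matrix.adjugate_fin_two, Matrix.trace_fin_two, add_comm]

lemma detN2 (M : Matrix (Fin 2) (Fin 2) ℝ) (μ : ℝ) :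
    (M - μ • (1 : Matrix (Fin 2) (Fin 2) ℝ)).det = μ ^ 2 - M.trace * μ + M.det := by
  simp [Matrix.det_fin_two, Matrix.trace_fin_two, Matrix.sub_apply, Matrix.smul_apply,
    Matrix.one_apply]
  ring

lemma trace_map_cast (A : Matrix (Fin 2) (Fin 2) ℤ) :
    (A.map (Int.cast : ℤ → ℝ)).trace = (A.trace : ℝ) := by
  simp [Matrix.trace_fin_two, Matrix.map_apply]

lemma det_map_cast (A : Matrix (Fin 2) (Fin 2) ℤ) :
    (A.map (Int.cast : ℤ → ℝ)).det = (A.det : ℝ) := by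
  simp [Matrix.det_fin_two, Matrix.map_apply]

lemma map_cast_pow (A : Matrix (Fin 2) (Fin 2) ℤ) (n : ℕ) :
    (A ^ n).map (Int.cast : ℤ → ℝ) = (A.map (Int.cast : ℤ → ℝ)) ^ n := by
  have := map_pow ((Int.castRingHom ℝ).mapMatrix) A n
  simpa [RingHom.mapMatrix_apply] using this

lemma trace_pow2 (M : Matrix (Fin 2) (Fin 2) ℝ) (μ ν : ℝ)
    (ht : M.trace = μ + ν) (hd : M.det = μ * ν) (n : ℕ) :
    (M ^ n).trace = μ ^ n + ν ^ n := by
  induction n using Nat.twoStepInduction with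
  | zero => norm_num [Matrix.trace_one]
  | one => simpa using ht
  | more n ih1 ih2 =>
    have hpow : M ^ (n + 2) = M.trace • M ^ (n + 1) - M.det • M ^ n := by
      rw [pow_add, pow_two, ch2 M, mul_sub, mul_smul_comm, mul_smul_comm, mul_one, ← pow_succ]
    rw [hpow, Matrix.trace_sub, Matrix.trace_smul, Matrix.trace_smul, ih1, ih2, ht, hd,
      smul_eq_mul, smul_eq_mul]
    ring

lemma inv_cond (g : GL (Fin 2) ℤ)
    (h : 1 + ((g : Matrix (Fin 2) (Fin 2) ℤ)).det ≠ (g : Matrix (Fin 2) (Fin 2) ℤ).trace) :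
    1 + ((↑(g⁻¹) : Matrix (Fin 2) (Fin 2) ℤ)).det ≠
      (↑(g⁻¹) : Matrix (Fin 2) (Fin 2) ℤ).trace := by
  set B := (g : Matrix (Fin 2) (Fin 2) ℤ) with hB
  set C := ((g⁻¹ : GL (Fin 2) ℤ) : Matrix (Fin 2) (Fin 2) ℤ) with hC
  have hBC : B * C = 1 := by
    rw [hB, hC, ← Units.val_mul, mul_inv_cancel, Units.val_one]
  have hdet : B.det * C.det = 1 := by rw [← Matrix.det_mul, hBC, Matrix.det_one]
  have hadj : B.det • C = adjugate B := by
    calc B.det • C = (B.det • (1 : Matrix (Fin 2) (Fin 2) ℤ)) * C := by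
          rw [Matrix.smul_mul, Matrix.one_mul]
      _ = (adjugate B * B) * C := by rw [Matrix.adjugate_mul]
      _ = adjugate B * (B * C) := by rw [Matrix.mul_assoc]
      _ = adjugate B := by rw [hBC, Matrix.mul_one]
  have htr : B.det * C.trace = B.trace := by
    have := congrArg Matrix.trace hadj
    rwa [Matrix.trace_smul, smul_eq_mul, tradj2] at this
  intro hc
  apply h
  have := congrArg (B.det * ·) hc
  simp only [mul_add, mul_one, hdet, htr] at this
  linarith

lemma det_pm (φ : GL (Fin 2) ℤ) :
    ((φ : Matrix (Fin 2) (Fin 2) ℤ)).det = 1 ∨ ((φ : Matrix (Fin 2) (Fin 2) ℤ)).det = -1 := by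
  have : IsUnit ((φ : Matrix (Fin 2) (Fin 2) ℤ)).det :=
    (Matrix.isUnit_iff_isUnit_det _).mp ⟨φ, rfl⟩
  exact Int.isUnit_iff.mp this

lemma cond_of_root (φ : GL (Fin 2) ℤ) (μ : ℝ) (hμ : 1 < |μ|)
    (hroot : μ ^ 2 - ((φ : Matrix (Fin 2) (Fin 2) ℤ).trace : ℝ) * μ
        + ((φ : Matrix (Fin 2) (Fin 2) ℤ).det : ℝ) = 0) :
    ∀ r : ℤ, r ≠ 0 →
      1 + Matrix.det ((φ ^ r : GL (Fin 2) ℤ) : Matrix (Fin 2) (Fin 2) ℤ) ≠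
        Matrix.trace ((φ ^ r : GL (Fin 2) ℤ) : Matrix (Fin 2) (Fin 2) ℤ) := by
  set A := (φ : Matrix (Fin 2) (Fin 2) ℤ) with hA
  set M := A.map (Int.cast : ℤ → ℝ) with hM
  set ν : ℝ := (A.trace : ℝ) - μ with hν
  have hμ0 : (0:ℝ) < |μ| := lt_trans one_pos hμ
  have hsum : M.trace = μ + ν := by rw [trace_map_cast]; ring
  have hprod : M.det = μ * ν := by
    rw [det_map_cast]
    have : μ * ν = (A.trace : ℝ) * μ - μ ^ 2 := by rw [hν]; ring
    linarith [hroot]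
  have habsd : |(A.det : ℝ)| = 1 := by
    rcases det_pm φ with h | h <;> rw [h] <;> norm_num
  have hνabs : |ν| < 1 := by
    have h1 : |μ| * |ν| = 1 := by
      rw [← abs_mul, ← hprod, det_map_cast, habsd]
    nlinarith [abs_nonneg ν]
  -- positive powers
  have hnat : ∀ n : ℕ, 0 < n → 1 + (A ^ n).det ≠ (A ^ n).trace := by
    intro n hn heq
    have hcast : (1 : ℝ) + ((A ^ n).det : ℝ) = ((A ^ n).trace : ℝ) := by
      exact_mod_cast congrArg (Int.cast : ℤ → ℝ) heq
    have h1 : ((A ^ n).det : ℝ) = (μ * ν) ^ n := by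
      rw [← det_map_cast, map_cast_pow, Matrix.det_pow, hprod]
    have h2 : ((A ^ n).trace : ℝ) = μ ^ n + ν ^ n := by
      rw [← trace_map_cast, map_cast_pow, trace_pow2 M μ ν hsum hprod]
    rw [h1, h2] at hcast
    have hfact : (μ ^ n - 1) * (ν ^ n - 1) = 0 := by rw [mul_pow] at hcast; nlinarith
    rcases mul_eq_zero.mp hfact with h | h
    · have : 1 < |μ| ^ n := one_lt_pow₀ hμ hn.ne'
      rw [← abs_pow] at this
      have h' : μ ^ n = 1 := sub_eq_zero.mp h
      rw [h'] at this; simp at this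
    · have : |ν| ^ n < 1 := pow_lt_one₀ (abs_nonneg ν) hνabs hn.ne'
      rw [← abs_pow] at this
      have h' : ν ^ n = 1 := sub_eq_zero.mp h
      rw [h'] at this; simp at this
  intro r hr
  rcases lt_or_gt_of_ne hr with hneg | hpos
  · set n : ℕ := r.natAbs with hn
    have hr' : r = -(n : ℤ) := by omega
    have hn0 : 0 < n := by omega
    have : (φ ^ r : GL (Fin 2) ℤ) = (φ ^ n)⁻¹ := by
      rw [hr', _root_.zpow_neg, zpow_natCast]
    rw [this]
    have hcond : 1 + ((φ ^ n : GL (Fin 2) ℤ) : Matrix (Fin 2) (Fin 2) ℤ).det ≠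
        ((φ ^ n : GL (Fin 2) ℤ) : Matrix (Fin 2) (Fin 2) ℤ).trace := by
      rw [Units.val_pow_eq_pow_val]; exact hnat n hn0
    exact inv_cond _ hcond
  · set n : ℕ := r.natAbs with hn
    have hr' : r = (n : ℤ) := by omega
    have hn0 : 0 < n := by omega
    rw [hr', zpow_natCast, Units.val_pow_eq_pow_val]
    exact hnat n hn0

lemma eigen_of_root (φ : GL (Fin 2) ℤ) (μ : ℝ)
    (hroot : μ ^ 2 - ((φ : Matrix (Fin 2) (Fin 2) ℤ).trace : ℝ) * μ
        + ((φ : Matrix (Fin 2) (Fin 2) ℤ).det : ℝ) = 0) :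
    ∃ v : Fin 2 → ℝ, v ≠ 0 ∧
      ((φ : Matrix (Fin 2) (Fin 2) ℤ).map (Int.cast : ℤ → ℝ)).mulVec v = μ • v := by
  set M := ((φ : Matrix (Fin 2) (Fin 2) ℤ)).map (Int.cast : ℤ → ℝ) with hM
  have hdet : (M - μ • 1).det = 0 := by
    rw [detN2, trace_map_cast, det_map_cast]; exact hroot
  obtain ⟨v, hv, hmv⟩ := (Matrix.exists_mulVec_eq_zero_iff).mpr hdet
  refine ⟨v, hv, ?_⟩
  rw [Matrix.sub_mulVec, Matrix.smul_mulVec, Matrix.one_mulVec, sub_eq_zero] at hmv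
  exact hmv

lemma root_of_eigen (φ : GL (Fin 2) ℤ) (μ : ℝ) (v : Fin 2 → ℝ) (hv : v ≠ 0)
    (hmv : ((φ : Matrix (Fin 2) (Fin 2) ℤ).map (Int.cast : ℤ → ℝ)).mulVec v = μ • v) :
    μ ^ 2 - ((φ : Matrix (Fin 2) (Fin 2) ℤ).trace : ℝ) * μ
        + ((φ : Matrix (Fin 2) (Fin 2) ℤ).det : ℝ) = 0 := by
  set M := ((φ : Matrix (Fin 2) (Fin 2) ℤ)).map (Int.cast : ℤ → ℝ) with hM
  have h0 : (M - μ • 1).mulVec v = 0 := by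
    rw [Matrix.sub_mulVec, Matrix.smul_mulVec, Matrix.one_mulVec, hmv, sub_self]
  have hdet : (M - μ • 1).det = 0 :=
    (Matrix.exists_mulVec_eq_zero_iff).mp ⟨v, hv, h0⟩
  rwa [detN2, trace_map_cast, det_map_cast] at hdet

lemma exists_mu_pos (u : ℝ) (e : ℝ) (hcase : (e = 1 ∧ 3 ≤ u) ∨ (e = -1 ∧ 1 ≤ u)) :
    ∃ μ : ℝ, 1 < μ ∧ μ ^ 2 - u * μ + e = 0 := by
  have hD : 0 ≤ u ^ 2 - 4 * e := by
    rcases hcase with ⟨he, hu⟩ | ⟨he, hu⟩ <;> rw [he] <;> nlinarith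
  have hs2 : Real.sqrt (u ^ 2 - 4 * e) ^ 2 = u ^ 2 - 4 * e := Real.sq_sqrt hD
  have hs0 : 0 ≤ Real.sqrt (u ^ 2 - 4 * e) := Real.sqrt_nonneg _
  refine ⟨(u + Real.sqrt (u ^ 2 - 4 * e)) / 2, ?_, by linear_combination hs2 / 4⟩
  rcases hcase with ⟨he, hu⟩ | ⟨he, hu⟩
  · linarith
  · have : 2 < Real.sqrt (u ^ 2 - 4 * e) := by nlinarith
    linarith

lemma exists_mu (t d : ℤ) (h : (d = 1 ∧ (t ≤ -3 ∨ 3 ≤ t)) ∨ (d = -1 ∧ t ≠ 0)) :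
    ∃ μ : ℝ, 1 < |μ| ∧ μ ^ 2 - (t : ℝ) * μ + (d : ℝ) = 0 := by
  have hposcase : ∀ u e : ℝ, ((e = 1 ∧ 3 ≤ u) ∨ (e = -1 ∧ 1 ≤ u)) →
      ∃ μ : ℝ, 1 < |μ| ∧ μ ^ 2 - u * μ + e = 0 := by
    intro u e hc
    obtain ⟨μ, hμ, hr⟩ := exists_mu_pos u e hc
    exact ⟨μ, lt_of_lt_of_le hμ (le_abs_self μ), hr⟩
  have hsymm : ∀ u e : ℝ, (∃ μ : ℝ, 1 < |μ| ∧ μ ^ 2 - (-u) * μ + e = 0) →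
      ∃ μ : ℝ, 1 < |μ| ∧ μ ^ 2 - u * μ + e = 0 := by
    rintro u e ⟨μ, hμ, hr⟩
    exact ⟨-μ, by rwa [abs_neg], by linear_combination hr⟩
  rcases h with ⟨hd, ht | ht⟩ | ⟨hd, ht⟩
  · apply hsymm
    apply hposcase
    left
    constructor
    · exact_mod_cast hd
    · have : (t : ℝ) ≤ -3 := by exact_mod_cast ht
      linarith
  · apply hposcase
    left
    exact ⟨by exact_mod_cast hd, by exact_mod_cast ht⟩
  · rcases lt_or_gt_of_ne ht with ht' | ht'
    · apply hsymm
      apply hposcase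
      right
      constructor
      · exact_mod_cast hd
      · have : (t : ℝ) ≤ -1 := by exact_mod_cast (show t ≤ -1 by omega)
        linarith
    · apply hposcase
      right
      refine ⟨by exact_mod_cast hd, ?_⟩
      exact_mod_cast ht'

theorem betti_one_all_powers_iff_hyperbolic (φ : GL (Fin 2) ℤ) :
    (∀ r : ℤ, r ≠ 0 →
        1 + Matrix.det ((φ ^ r : GL (Fin 2) ℤ) : Matrix (Fin 2) (Fin 2) ℤ) ≠
          Matrix.trace ((φ ^ r : GL (Fin 2) ℤ) : Matrix (Fin 2) (Fin 2) ℤ)) ↔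
      (¬ IsOfFinOrder φ ∧
        ∃ μ : ℝ, 1 < |μ| ∧ ∃ v : Fin 2 → ℝ, v ≠ 0 ∧
          ((φ : Matrix (Fin 2) (Fin 2) ℤ).map (Int.cast : ℤ → ℝ)).mulVec v = μ • v) := by
  constructor
  · intro h
    set A := (φ : Matrix (Fin 2) (Fin 2) ℤ) with hA
    have key : ∀ n : ℕ, 0 < n → 1 + (A ^ n).det ≠ (A ^ n).trace := by
      intro n hn
      have := h (n : ℤ) (by exact_mod_cast hn.ne')
      rwa [zpow_natCast, Units.val_pow_eq_pow_val] at this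
    have keyone : ∀ n : ℕ, 0 < n → A ^ n ≠ 1 := by
      intro n hn h1
      have := key n hn
      rw [h1] at this
      norm_num [Matrix.trace_one, Fintype.card_fin] at this
    have hfin : ¬ IsOfFinOrder φ := by
      intro hf
      obtain ⟨n, hn, hpow⟩ := isOfFinOrder_iff_pow_eq_one.mp hf
      exact keyone n hn (by rw [hA, ← Units.val_pow_eq_pow_val, hpow, Units.val_one])
    have hCH := ch2 A
    have h1 := key 1 one_pos
    rw [pow_one] at h1
    have h2tr : (A ^ 2).trace = A.trace * A.trace - 2 * A.det := by
      rw [pow_two, hCH, Matrix.trace_sub, Matrix.trace_smul, Matrix.trace_smul,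
        Matrix.trace_one, smul_eq_mul, smul_eq_mul, Fintype.card_fin]
      ring
    have h2det : (A ^ 2).det = A.det * A.det := by rw [pow_two, Matrix.det_mul]
    have h2 := key 2 two_pos
    rw [h2tr, h2det] at h2
    have htd : (A.det = 1 ∧ (A.trace ≤ -3 ∨ 3 ≤ A.trace)) ∨ (A.det = -1 ∧ A.trace ≠ 0) := by
      rcases det_pm φ with hd | hd
      · left
        refine ⟨hd, ?_⟩
        by_contra hcon
        push_neg at hcon
        obtain ⟨hl, hr⟩ := hcon
        have hcases : A.trace = -2 ∨ A.trace = -1 ∨ A.trace = 0 ∨ A.trace = 1 ∨ A.trace = 2 := by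
          omega
        rcases hcases with ht | ht | ht | ht | ht
        · rw [ht, hd] at h2; norm_num at h2
        · have hAA : A * A = -A - 1 := by rw [hCH, ht, hd]; simp
          apply keyone 3 (by norm_num)
          rw [pow_succ, pow_two, hAA]
          have e1 : (-A - 1) * A = -(A * A) - A := by noncomm_ring
          rw [e1, hAA]
          noncomm_ring
        · have hAA : A * A = -1 := by rw [hCH, ht, hd]; simp
          apply keyone 4 (by norm_num)
          rw [show (4 : ℕ) = 2 * 2 from rfl, pow_mul, pow_two, pow_two, hAA]
          noncomm_ring
        · have hAA : A * A = A - 1 := by rw [hCH, ht, hd]; simp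
          have h3 : A ^ 3 = -1 := by
            rw [pow_succ, pow_two, hAA]
            have e1 : (A - 1) * A = A * A - A := by noncomm_ring
            rw [e1, hAA]
            noncomm_ring
          apply keyone 6 (by norm_num)
          rw [show (6 : ℕ) = 3 * 2 from rfl, pow_mul, h3]
          noncomm_ring
        · rw [ht, hd] at h1; norm_num at h1
      · right
        refine ⟨hd, ?_⟩
        intro ht
        have hAA : A * A = 1 := by rw [hCH, ht, hd]; simp
        exact keyone 2 two_pos (by rw [pow_two, hAA])
    refine ⟨hfin, ?_⟩
    obtain ⟨μ, hμ, hroot⟩ := exists_mu A.trace A.det htd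
    obtain ⟨v, hv, hmv⟩ := eigen_of_root φ μ hroot
    exact ⟨μ, hμ, v, hv, hmv⟩
  · rintro ⟨-, μ, hμ, v, hv, hmv⟩
    exact cond_of_root φ μ hμ (root_of_eigen φ μ v hv hmv)
end

section
/- Up to conjugacy in GL(2,ℤ), the only matrix with trace 3 and determinant 1 is [[2,1],[1,1]]: every φ ∈ GL(2,ℤ) with tr φ = 3 and det φ = 1 is conjugate in GL(2,ℤ) to [[2,1],[1,1]]. -/
namespace TraceThreeAux

abbrev Mat2 := Matrix (Fin 2) (Fin 2) ℤ

def ConjTo (M N : Mat2) : Prop := ∃ P Q : Mat2, P*Q = 1 ∧ Q*P = 1 ∧ P*M*Q = N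

lemma ConjTo.of_step {M M' N : Mat2} (R R' : Mat2) (h1 : R*R' = 1) (h2 : R'*R = 1)
    (h3 : R*M*R' = M') (h : ConjTo M' N) : ConjTo M N := by
  obtain ⟨P, Q, hPQ, hQP, hPMQ⟩ := h
  refine ⟨P*R, R'*Q, ?_, ?_, ?_⟩
  · have : P*R*(R'*Q) = P*(R*R')*Q := by noncomm_ring
    rw [this, h1, mul_one, hPQ]
  · have : R'*Q*(P*R) = R'*(Q*P)*R := by noncomm_ring
    rw [this, hQP, mul_one, h2]
  · have : P*R*M*(R'*Q) = P*(R*M*R')*Q := by noncomm_ring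
    rw [this, h3, hPMQ]

lemma base1 (a b d : ℤ) (h1 : a + d = 1) (h2 : a*d - b = -1) :
    ConjTo !![a,b;1,d] !![1,1;1,0] := by
  refine ⟨!![1,1-a;0,1], !![1,a-1;0,1], ?_, ?_, ?_⟩
  · ext i j; fin_cases i <;> fin_cases j <;>
      simp [Matrix.mul_apply, Fin.sum_univ_two]
  · ext i j; fin_cases i <;> fin_cases j <;>
      simp [Matrix.mul_apply, Fin.sum_univ_two]
  · ext i j; fin_cases i <;> fin_cases j <;>
      simp [Matrix.mul_apply, Fin.sum_univ_two] <;> nlinarith [h1, h2]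

lemma exists_near (t m : ℤ) (hm : 0 < m) : ∃ j : ℤ, |t - 2*m*j| ≤ m := by
  refine ⟨if t % (2*m) ≤ m then t / (2*m) else t/(2*m) + 1, ?_⟩
  have h2m : (0:ℤ) < 2*m := by linarith
  have h1 := Int.emod_nonneg t (by positivity : (2*m) ≠ 0)
  have h2 := Int.emod_lt_of_pos t h2m
  have h3 := Int.emod_add_mul_ediv t (2*m)
  split_ifs with h <;> rw [abs_le] <;> constructor <;> nlinarith [h1, h2, h3]

lemma Tconj (a b c d k : ℤ) :
    !![1,k;0,1] * !![a,b;c,d] * !![1,-k;0,1]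
      = !![a + k*c, b + k*(d-a) - k^2*c; c, d - k*c] := by
  ext i j; fin_cases i <;> fin_cases j <;>
    simp [Matrix.mul_apply, Fin.sum_univ_two] <;> ring

lemma Sconj (a b c d : ℤ) :
    !![0,1;1,0] * !![a,b;c,d] * !![0,1;1,0] = !![d,c;b,a] := by
  ext i j; fin_cases i <;> fin_cases j <;>
    simp [Matrix.mul_apply, Fin.sum_univ_two]

lemma Dconj (a b c d : ℤ) :
    !![1,0;0,-1] * !![a,b;c,d] * !![1,0;0,-1] = !![a,-b;-c,d] := by
  ext i j; fin_cases i <;> fin_cases j <;>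
    simp [Matrix.mul_apply, Fin.sum_univ_two]

lemma TTinv (k : ℤ) : (!![1,k;0,1] : Mat2) * !![1,-k;0,1] = 1 := by
  ext i j; fin_cases i <;> fin_cases j <;>
    simp [Matrix.mul_apply, Fin.sum_univ_two, Matrix.one_apply]

lemma SS : (!![0,1;1,0] : Mat2) * !![0,1;1,0] = 1 := by
  ext i j; fin_cases i <;> fin_cases j <;>
    simp [Matrix.mul_apply, Fin.sum_univ_two, Matrix.one_apply]

lemma DD : (!![1,0;0,-1] : Mat2) * !![1,0;0,-1] = 1 := by
  ext i j; fin_cases i <;> fin_cases j <;>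
    simp [Matrix.mul_apply, Fin.sum_univ_two, Matrix.one_apply]

set_option maxHeartbeats 1000000 in
lemma key : ∀ n : ℕ, ∀ a b c d : ℤ, c.natAbs ≤ n → a + d = 1 → a*d - b*c = -1 →
    ConjTo !![a,b;c,d] !![1,1;1,0] := by
  intro n
  induction n with
  | zero =>
    intro a b c d hc h1 h2
    have hc0 : c = 0 := by omega
    subst hc0
    exfalso
    have hud : a * (-d) = 1 := by linarith [h2]
    rcases Int.isUnit_iff.mp (IsUnit.of_mul_eq_one (-d) hud) with h | h <;>
      subst h <;> linarith [hud, h1]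
  | succ n ih =>
    intro a b c d hc h1 h2
    rcases eq_or_ne c 0 with hc0 | hc0
    · subst hc0
      exfalso
      have hud : a * (-d) = 1 := by linarith [h2]
      rcases Int.isUnit_iff.mp (IsUnit.of_mul_eq_one (-d) hud) with h | h <;>
        subst h <;> linarith [hud, h1]
    rcases eq_or_ne c 1 with rfl | hc1
    · exact base1 a b d h1 (by linarith [h2])
    rcases eq_or_ne c (-1) with rfl | hcm1
    · refine ConjTo.of_step _ _ DD DD (Dconj a b (-1) d) ?_
      have : (-(-1) : ℤ) = 1 := by norm_num
      rw [this]
      exact base1 a (-b) d h1 (by linarith [h2])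
    -- now |c| ≥ 2
    have hm2 : 2 ≤ ((c.natAbs : ℤ)) := by omega
    have hm0 : 0 < ((c.natAbs : ℤ)) := by omega
    obtain ⟨j, hj⟩ := exists_near (1 - 2*a) (c.natAbs : ℤ) hm0
    obtain ⟨k, hkc⟩ : ∃ k : ℤ, k * c = j * (c.natAbs : ℤ) := by
      rcases Int.natAbs_eq c with h | h
      · exact ⟨j, by linear_combination j*h⟩
      · exact ⟨-j, by linear_combination (-j)*h⟩
    obtain ⟨a', ha'⟩ : ∃ x : ℤ, x = a + k*c := ⟨_, rfl⟩
    obtain ⟨b', hb'⟩ : ∃ x : ℤ, x = b + k*(d-a) - k^2*c := ⟨_, rfl⟩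
    obtain ⟨d', hd'⟩ : ∃ x : ℤ, x = d - k*c := ⟨_, rfl⟩
    have hE : |2*a' - 1| ≤ (c.natAbs : ℤ) := by
      have heq : 2*a' - 1 = -((1 - 2*a) - 2*(c.natAbs : ℤ)*j) := by
        linear_combination 2*ha' + 2*hkc
      rw [heq, abs_neg]; exact hj
    have h1' : d' + a' = 1 := by linear_combination hd' + ha' + h1
    have h2' : d' * a' - c * b' = -1 := by
      rw [ha', hb', hd']; linear_combination h2
    have hcb : 4 * (c * b') = 5 - (2*a'-1)^2 := by
      linear_combination (-4 : ℤ)*h2' + 4*a'*h1'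
    have hc2 : (4:ℤ) ≤ c^2 := by nlinarith [Int.natAbs_mul_self' c, hm2]
    have he2 : (2*a'-1)^2 ≤ c^2 := by
      have h0 : |2*a'-1| ≤ |c| := by rwa [Int.abs_eq_natAbs c]
      have h0' := abs_le.mp h0
      nlinarith [sq_abs c, abs_nonneg c, h0'.1, h0'.2]
    have he1 : (1:ℤ) ≤ (2*a'-1)^2 := by
      have hne : 2*a' - 1 ≠ 0 := by omega
      rcases hne.lt_or_gt with h | h <;> nlinarith
    have hb2 : b'^2 < c^2 := by
      have hf1 : (0:ℤ) < 4*c^2 - 5 + (2*a'-1)^2 := by nlinarith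
      have hf2 : (0:ℤ) < 4*c^2 + 5 - (2*a'-1)^2 := by nlinarith
      have h16 : 16*(c*b')^2 = (5 - (2*a'-1)^2)^2 := by
        linear_combination (4*(c*b') + 5 - (2*a'-1)^2) * hcb
      have key1 : (16*c^2) * b'^2 < (16*c^2) * c^2 := by
        linarith [mul_pos hf1 hf2, h16]
      exact lt_of_mul_lt_mul_left key1 (by positivity)
    have hble : b'.natAbs ≤ n := by
      have hlt : b'.natAbs < c.natAbs := by
        by_contra hcon
        push_neg at hcon
        have hcast : ((c.natAbs : ℤ)) ≤ ((b'.natAbs : ℤ)) := by exact_mod_cast hcon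
        have hmul : ((c.natAbs:ℤ)) * ((c.natAbs:ℤ)) ≤ ((b'.natAbs:ℤ)) * ((b'.natAbs:ℤ)) :=
          mul_le_mul hcast hcast (by positivity) (by positivity)
        linarith [Int.natAbs_mul_self' c, Int.natAbs_mul_self' b', hmul, hb2]
      omega
    refine ConjTo.of_step (M' := !![a',b';c,d']) _ _ (TTinv k) ?_ ?_ ?_
    · have := TTinv (-k); simpa using this
    · rw [Tconj, ← ha', ← hb', ← hd']
    refine ConjTo.of_step _ _ SS SS (Sconj a' b' c d') ?_
    exact ih d' c b' a' hble h1' h2'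

end TraceThreeAux

open TraceThreeAux

theorem trace_three_det_one_unique_conj (φ : GL (Fin 2) ℤ)
    (htr : Matrix.trace (φ : Matrix (Fin 2) (Fin 2) ℤ) = 3)
    (hdet : Matrix.det (φ : Matrix (Fin 2) (Fin 2) ℤ) = 1) :
    ∃ P : GL (Fin 2) ℤ,
      ((P * φ * P⁻¹ : GL (Fin 2) ℤ) : Matrix (Fin 2) (Fin 2) ℤ) = !![2, 1; 1, 1] := by
  set M : Mat2 := (φ : Matrix (Fin 2) (Fin 2) ℤ) with hM
  set a : ℤ := M 0 0
  set b : ℤ := M 0 1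
  set c : ℤ := M 1 0
  set d : ℤ := M 1 1
  have hMeq : M = !![a, b; c, d] := by
    rw [Matrix.eta_fin_two M]
  rw [Matrix.trace_fin_two] at htr
  rw [Matrix.det_fin_two] at hdet
  have h1 : (a - 1) + (d - 1) = 1 := by linarith
  have h2 : (a - 1)*(d - 1) - b*c = -1 := by nlinarith [htr, hdet]
  obtain ⟨P, Q, hPQ, hQP, hPMQ⟩ := key (c.natAbs) (a-1) b c (d-1) le_rfl h1 h2
  refine ⟨⟨P, Q, hPQ, hQP⟩, ?_⟩
  have hcoe : (((⟨P, Q, hPQ, hQP⟩ : GL (Fin 2) ℤ) * φ * (⟨P, Q, hPQ, hQP⟩ : GL (Fin 2) ℤ)⁻¹ :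
      GL (Fin 2) ℤ) : Matrix (Fin 2) (Fin 2) ℤ) = P * M * Q := by
    simp [hM]
  rw [hcoe]
  have hsplit : M = !![a-1, b; c, d-1] + 1 := by
    rw [hMeq]
    ext i j; fin_cases i <;> fin_cases j <;> simp [Matrix.one_fin_two]
  rw [hsplit, mul_add, add_mul, mul_one, hPMQ, hPQ]
  ext i j; fin_cases i <;> fin_cases j <;> simp [Matrix.one_fin_two]
end

section
/- Every φ ∈ GL(2,ℤ) with trace 1 and determinant −1 is conjugate in GL(2,ℤ) to the matrix [[1,1],[1,0]]. -/
/-- `M` is conjugated to `!![1,1;1,0]` by some unimodular `P` (stated as `P * M = F * P`). -/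
def RelF (M : Matrix (Fin 2) (Fin 2) ℤ) : Prop :=
  ∃ P : Matrix (Fin 2) (Fin 2) ℤ, IsUnit P.det ∧ P * M = !![1, 1; 1, 0] * P

lemma mul2 (a b c d e f g h : ℤ) :
    !![a,b;c,d] * !![e,f;g,h] = !![a*e+b*g, a*f+b*h; c*e+d*g, c*f+d*h] := by
  ext i j; fin_cases i <;> fin_cases j <;> simp [Matrix.mul_apply, Fin.sum_univ_two]

lemma eq2 {a b c d e f g h : ℤ} (h1 : a = e) (h2 : b = f) (h3 : c = g) (h4 : d = h) :
    !![a,b;c,d] = !![e,f;g,h] := by subst h1 h2 h3 h4; rfl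

lemma rel_step {Q M M' : Matrix (Fin 2) (Fin 2) ℤ} (hQ : IsUnit Q.det)
    (hcomm : Q * M = M' * Q) (h : RelF M') : RelF M := by
  obtain ⟨P, hP, hPM⟩ := h
  refine ⟨P * Q, by rw [Matrix.det_mul]; exact hP.mul hQ, ?_⟩
  rw [mul_assoc, hcomm, ← mul_assoc, hPM, mul_assoc]

lemma move_translate (n a b c : ℤ)
    (h : RelF !![a + n*c, b + n*(1-2*a) - n^2*c; c, 1-(a+n*c)]) :
    RelF !![a, b; c, 1-a] := by
  refine rel_step (Q := !![1, n; 0, 1]) ?_ ?_ h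
  · rw [Matrix.det_fin_two_of]; norm_num
  · rw [mul2, mul2]; exact eq2 (by ring) (by ring) (by ring) (by ring)

lemma move_swap (a b c : ℤ)
    (h : RelF !![1-a, c; b, 1-(1-a)]) :
    RelF !![a, b; c, 1-a] := by
  refine rel_step (Q := !![0, 1; 1, 0]) ?_ ?_ h
  · rw [Matrix.det_fin_two_of]; norm_num
  · rw [mul2, mul2]; exact eq2 (by ring) (by ring) (by ring) (by ring)

lemma move_neg (a b c : ℤ)
    (h : RelF !![a, -b; -c, 1-a]) :
    RelF !![a, b; c, 1-a] := by
  refine rel_step (Q := !![1, 0; 0, -1]) ?_ ?_ h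
  · rw [Matrix.det_fin_two_of]; norm_num
  · rw [mul2, mul2]; exact eq2 (by ring) (by ring) (by ring) (by ring)

lemma no_sol (a : ℤ) : a * (1 - a) ≠ -1 := by
  intro h
  have h1 : a * (a - 1) = 1 := by linarith [h]
  have hu : IsUnit a := ⟨⟨a, a - 1, h1, by rw [mul_comm]; exact h1⟩, rfl⟩
  rcases Int.isUnit_iff.mp hu with rfl | rfl <;> norm_num at h1

lemma sq_ne_five (r : ℤ) : r ^ 2 ≠ 5 := by
  intro h
  rcases le_or_gt r (-3) with hr | hr
  · nlinarith
  · rcases le_or_gt 3 r with hr2 | hr2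
    · nlinarith
    · interval_cases r <;> norm_num at h

lemma key : ∀ N : ℕ, ∀ a b c : ℤ, c.natAbs ≤ N → 0 < c → a * (1 - a) - b * c = -1 →
    RelF !![a, b; c, 1 - a] := by
  intro N
  induction N with
  | zero => intro a b c hle hc _; omega
  | succ N IH =>
    intro a b c hle hc h
    rcases eq_or_lt_of_le (show (1:ℤ) ≤ c by omega) with hc1 | hc2
    · -- c = 1 : finish by translating a to 1
      have hc1' : c = 1 := hc1.symm
      subst hc1'
      apply move_translate (1 - a)
      have e1 : a + (1 - a) * 1 = 1 := by ring
      have e2 : b + (1 - a) * (1 - 2*a) - (1 - a)^2 * 1 = 1 := by linear_combination -h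
      rw [e1, e2]
      exact ⟨1, by simp, by norm_num⟩
    · -- c ≥ 2 : descent
      have hc2' : 2 ≤ c := hc2
      obtain ⟨n, hnl, hnu⟩ : ∃ n : ℤ, -c ≤ 2*(a + n*c) - 1 ∧ 2*(a + n*c) - 1 < c := by
        refine ⟨-((2*a - 1 + c) / (2*c)), ?_, ?_⟩ <;>
        · have hd := Int.emod_def (2*a - 1 + c) (2*c)
          have h0 := Int.emod_nonneg (2*a - 1 + c) (show (2*c) ≠ 0 by positivity)
          have h1 := Int.emod_lt_of_pos (2*a - 1 + c) (show (0:ℤ) < 2*c by linarith)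
          ring_nf at hd h0 h1 ⊢
          linarith
      obtain ⟨a', ha'⟩ : ∃ a', a' = a + n*c := ⟨_, rfl⟩
      obtain ⟨b', hb'⟩ : ∃ b', b' = b + n*(1-2*a) - n^2*c := ⟨_, rfl⟩
      obtain ⟨r, hr⟩ : ∃ r, r = 2*a' - 1 := ⟨_, rfl⟩
      have hrlb : -c ≤ r := by rw [hr, ha']; exact hnl
      have hrub : r < c := by rw [hr, ha']; exact hnu
      have hrsq : r^2 ≤ c^2 := by
        nlinarith [mul_nonneg (show (0:ℤ) ≤ c - r by linarith) (show (0:ℤ) ≤ c + r by linarith)]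
      have h' : a' * (1 - a') - b' * c = -1 := by
        rw [ha', hb']; linear_combination h
      have h4 : 4 * (b' * c) = 5 - r^2 := by
        rw [hr]; linear_combination -4 * h'
      have hb'ne : b' ≠ 0 := by
        intro h0
        rw [h0] at h4
        exact sq_ne_five r (by linarith)
      have hblt : b' < c := by
        have : b' * c < c * c := by nlinarith [sq_nonneg r]
        exact lt_of_mul_lt_mul_right (by linarith) (le_of_lt hc)
      have hbgt : -c < b' := by
        have : (-c) * c < b' * c := by nlinarith
        exact lt_of_mul_lt_mul_right (by linarith) (le_of_lt hc)
      apply move_translate n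
      rw [← ha', ← hb', show (1 : ℤ) - a' = 1 - a' from rfl]
      apply move_swap
      rcases lt_or_gt_of_ne hb'ne with hbneg | hbpos
      · apply move_neg
        have hrel : (1 - a') * (1 - (1 - a')) - (-c) * (-b') = -1 := by linear_combination h'
        exact IH (1 - a') (-c) (-b') (by omega) (by omega) hrel
      · have hrel : (1 - a') * (1 - (1 - a')) - c * b' = -1 := by linear_combination h'
        exact IH (1 - a') c b' (by omega) hbpos hrel

theorem trace_one_det_neg_one_unique_conj (φ : GL (Fin 2) ℤ)
    (htr : Matrix.trace (φ : Matrix (Fin 2) (Fin 2) ℤ) = 1)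
    (hdet : Matrix.det (φ : Matrix (Fin 2) (Fin 2) ℤ) = -1) :
    ∃ P : GL (Fin 2) ℤ,
      ((P * φ * P⁻¹ : GL (Fin 2) ℤ) : Matrix (Fin 2) (Fin 2) ℤ) = !![1, 1; 1, 0] := by
  have htr2 : (φ : Matrix (Fin 2) (Fin 2) ℤ) 1 1 = 1 - (φ : Matrix (Fin 2) (Fin 2) ℤ) 0 0 := by
    rw [Matrix.trace_fin_two] at htr; omega
  have hMeq : (φ : Matrix (Fin 2) (Fin 2) ℤ) =
      !![(φ : Matrix (Fin 2) (Fin 2) ℤ) 0 0, (φ : Matrix (Fin 2) (Fin 2) ℤ) 0 1;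
         (φ : Matrix (Fin 2) (Fin 2) ℤ) 1 0, 1 - (φ : Matrix (Fin 2) (Fin 2) ℤ) 0 0] := by
    ext i j
    fin_cases i <;> fin_cases j <;> simp [htr2]
  obtain ⟨a, b, c, hMeq2⟩ : ∃ a b c : ℤ, (φ : Matrix (Fin 2) (Fin 2) ℤ) = !![a, b; c, 1 - a] :=
    ⟨_, _, _, hMeq⟩
  have hdet2 : a * (1 - a) - b * c = -1 := by
    rw [hMeq2, Matrix.det_fin_two_of] at hdet; exact hdet
  have hrel : RelF (φ : Matrix (Fin 2) (Fin 2) ℤ) := by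
    rw [hMeq2]
    rcases lt_trichotomy c 0 with hcneg | hczero | hcpos
    · apply move_neg
      have : (-b) * (-c) = b * c := by ring
      exact key (-c).natAbs a (-b) (-c) le_rfl (by omega) (by rw [this]; exact hdet2)
    · exfalso
      rw [hczero, mul_zero, sub_zero] at hdet2
      exact no_sol a hdet2
    · exact key c.natAbs a b c le_rfl hcpos hdet2
  obtain ⟨P, hP, hPM⟩ := hrel
  obtain ⟨u, hu⟩ := (Matrix.isUnit_iff_isUnit_det P).mpr hP
  refine ⟨u, ?_⟩
  have h1 : (u : Matrix (Fin 2) (Fin 2) ℤ) * (φ : Matrix (Fin 2) (Fin 2) ℤ)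
      = !![1, 1; 1, 0] * (u : Matrix (Fin 2) (Fin 2) ℤ) := by rw [hu]; exact hPM
  have h2 : (u : Matrix (Fin 2) (Fin 2) ℤ) * ((u⁻¹ : (Matrix (Fin 2) (Fin 2) ℤ)ˣ) :
      Matrix (Fin 2) (Fin 2) ℤ) = 1 := u.mul_inv
  show (u : Matrix (Fin 2) (Fin 2) ℤ) * (φ : Matrix (Fin 2) (Fin 2) ℤ) *
      ((u⁻¹ : (Matrix (Fin 2) (Fin 2) ℤ)ˣ) : Matrix (Fin 2) (Fin 2) ℤ) = !![1, 1; 1, 0]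
  rw [h1, mul_assoc, h2, mul_one]
end

section
/- The fundamental groups of the figure-eight knot complement and the trefoil knot complement have non-isomorphic profinite completions; indeed they have different sets of finite quotients, since ⟨x,y | yxy⁻¹xy = xyx⁻¹yx⟩ surjects onto D₁₀ while ⟨a,b | a² = b³⟩ does not. -/
/-- The relator of the figure-eight knot group
`⟨x, y | y x y⁻¹ x y = x y x⁻¹ y x⟩`. -/
def figEightRel : FreeGroup (Fin 2) :=
  (FreeGroup.of 1 * FreeGroup.of 0 * (FreeGroup.of 1)⁻¹ * FreeGroup.of 0 * FreeGroup.of 1) *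
    (FreeGroup.of 0 * FreeGroup.of 1 * (FreeGroup.of 0)⁻¹ * FreeGroup.of 1 * FreeGroup.of 0)⁻¹

/-- The figure-eight knot group `Π = ⟨x, y | y x y⁻¹ x y = x y x⁻¹ y x⟩`. -/
abbrev FigEightGroup := PresentedGroup ({figEightRel} : Set (FreeGroup (Fin 2)))

/-- The relator of the trefoil knot group `⟨a, b | a² = b³⟩`. -/
def trefoilRel : FreeGroup (Fin 2) :=
  (FreeGroup.of 0) ^ 2 * ((FreeGroup.of 1) ^ 3)⁻¹

/-- The trefoil knot group `T = ⟨a, b | a² = b³⟩`. -/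
abbrev TrefoilGroup := PresentedGroup ({trefoilRel} : Set (FreeGroup (Fin 2)))

open DihedralGroup

/-- The assignment `x ↦ sr 0`, `y ↦ sr 1` into `D₁₀`. -/
def figMap : Fin 2 → DihedralGroup 5 := ![sr 0, sr 1]

lemma figRel_holds : ∀ r ∈ ({figEightRel} : Set (FreeGroup (Fin 2))),
    FreeGroup.lift figMap r = 1 := by
  rintro r rfl
  simp only [figEightRel, figMap, map_mul, map_inv, FreeGroup.lift_apply_of]
  decide

/-- The surjection from the figure-eight knot group onto `D₁₀`. -/
def figHom : FigEightGroup →* DihedralGroup 5 := PresentedGroup.toGroup figRel_holds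

lemma figHom_surj : Function.Surjective figHom := by
  have h0 : figHom (PresentedGroup.of 0) = sr 0 := PresentedGroup.toGroup.of _
  have h1 : figHom (PresentedGroup.of 1) = sr 1 := PresentedGroup.toGroup.of _
  have hr : ∀ i : ZMod 5, ∃ x, figHom x = r i := by
    intro i
    refine ⟨(PresentedGroup.of 0 * PresentedGroup.of 1) ^ i.val, ?_⟩
    rw [map_pow, map_mul, h0, h1, sr_mul_sr, sub_zero, r_one_pow, ZMod.natCast_val,
      ZMod.cast_id]
  rintro (i | i)
  · exact hr i
  · obtain ⟨x, hx⟩ := hr i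
    exact ⟨PresentedGroup.of 0 * x, by rw [map_mul, h0, hx, sr_mul_r, zero_add]⟩

/-- The rotation subgroup of `D₁₀`. -/
def rotSubgroup : Subgroup (DihedralGroup 5) where
  carrier := {x | ∃ i, x = r i}
  one_mem' := ⟨0, rfl⟩
  mul_mem' := by rintro _ _ ⟨i, rfl⟩ ⟨j, rfl⟩; exact ⟨i + j, rfl⟩
  inv_mem' := by rintro _ ⟨i, rfl⟩; exact ⟨-i, rfl⟩

lemma sr_pow_two (i : ZMod 5) : (sr i : DihedralGroup 5) ^ 2 = 1 := by
  rw [pow_two, sr_mul_sr, sub_self]; rfl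

lemma sr_zpow (i : ZMod 5) (n : ℤ) :
    (sr i : DihedralGroup 5) ^ n = 1 ∨ (sr i : DihedralGroup 5) ^ n = sr i := by
  have h2 : (sr i : DihedralGroup 5) ^ (2 : ℤ) = 1 := by
    rw [show (2:ℤ) = ((2:ℕ):ℤ) from rfl, zpow_natCast, sr_pow_two]
  rcases Int.even_or_odd' n with ⟨k, rfl | rfl⟩
  · left; rw [zpow_mul, h2, one_zpow]
  · right; rw [zpow_add, zpow_mul, h2, one_zpow, one_mul, zpow_one]

lemma zmod5_triple (j : ZMod 5) (h : (0 : ZMod 5) = j + j + j) : j = 0 := by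
  revert h; revert j; decide

/-- In `D₁₀`, no pair `A, B` with `A² = B³` generates the whole group. -/
lemma no_pair : ∀ A B : DihedralGroup 5, A ^ 2 = B ^ 3 →
    Subgroup.closure {A, B} ≠ ⊤ := by
  rintro (i | i) (j | j) h htop
  · -- both rotations: the closure lies in the rotation subgroup
    have hle : Subgroup.closure {r i, r j} ≤ rotSubgroup := by
      rw [Subgroup.closure_le]
      rintro _ (rfl | rfl) <;> exact ⟨_, rfl⟩
    obtain ⟨k, hk⟩ : (sr 0 : DihedralGroup 5) ∈ rotSubgroup :=
      hle (htop ▸ Subgroup.mem_top _)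
    exact nomatch hk
  · -- A rotation, B reflection: rotation = reflection, impossible
    simp only [pow_succ, pow_zero, one_mul, r_mul_r, sr_mul_sr, sr_mul_r, r_mul_sr] at h
    exact nomatch h
  · -- A reflection, B rotation: then B = 1 and ⟨A⟩ has order 2
    simp only [pow_succ, pow_zero, one_mul, r_mul_r, sr_mul_sr, sub_self] at h
    injection h with h
    have hj : j = 0 := zmod5_triple j h
    subst hj
    have hle : Subgroup.closure {sr i, r 0} ≤ Subgroup.closure {sr i} := by
      rw [Subgroup.closure_le]
      rintro _ (rfl | rfl)
      · exact Subgroup.subset_closure rfl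
      · exact Subgroup.one_mem _
    obtain ⟨n, hn⟩ := Subgroup.mem_closure_singleton.1
      (hle (htop ▸ Subgroup.mem_top (r 1 : DihedralGroup 5)))
    rcases sr_zpow i n with he | he <;> rw [he] at hn
    · rw [DihedralGroup.one_def] at hn
      injection hn with hn
      exact absurd hn (by decide)
    · exact nomatch hn
  · -- both reflections: A² = 1 is a rotation, B³ is a reflection
    simp only [pow_succ, pow_zero, one_mul, sr_mul_sr, sr_mul_r, r_mul_sr, sub_self] at h
    exact nomatch h

lemma trefoil_rel_eq :
    (PresentedGroup.of 0 : TrefoilGroup) ^ 2 = (PresentedGroup.of 1 : TrefoilGroup) ^ 3 := by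
  have h : (QuotientGroup.mk' (Subgroup.normalClosure
      ({trefoilRel} : Set (FreeGroup (Fin 2))))) trefoilRel = 1 :=
    (QuotientGroup.eq_one_iff _).2 (Subgroup.subset_normalClosure rfl)
  rw [trefoilRel, map_mul, map_inv, map_pow, map_pow, mul_inv_eq_one] at h
  exact h

lemma no_trefoil_surj : ¬ ∃ f : TrefoilGroup →* DihedralGroup 5, Function.Surjective f := by
  rintro ⟨f, hf⟩
  set A := f (PresentedGroup.of 0) with hA
  set B := f (PresentedGroup.of 1) with hB
  have hrel : A ^ 2 = B ^ 3 := by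
    rw [hA, hB, ← map_pow, ← map_pow, trefoil_rel_eq]
  refine no_pair A B hrel ?_
  have hrange : Set.range (f ∘ (PresentedGroup.of :
      Fin 2 → TrefoilGroup)) = {A, B} := by
    ext x
    constructor
    · rintro ⟨i, rfl⟩
      fin_cases i
      · exact Or.inl rfl
      · exact Or.inr rfl
    · rintro (rfl | rfl)
      · exact ⟨0, rfl⟩
      · exact ⟨1, rfl⟩
  calc Subgroup.closure {A, B}
      = Subgroup.closure (Set.range (f ∘ PresentedGroup.of)) := by rw [hrange]
    _ = Subgroup.closure (f '' Set.range PresentedGroup.of) := by rw [Set.range_comp]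
    _ = Subgroup.map f (Subgroup.closure (Set.range PresentedGroup.of)) :=
        (MonoidHom.map_closure f _).symm
    _ = Subgroup.map f ⊤ := by rw [PresentedGroup.closure_range_of]
    _ = ⊤ := by rw [← MonoidHom.range_eq_map, MonoidHom.range_eq_top.2 hf]

theorem figEight_trefoil_different_finite_quotients :
    (∃ f : FigEightGroup →* DihedralGroup 5, Function.Surjective f) ∧
    (¬ ∃ f : TrefoilGroup →* DihedralGroup 5, Function.Surjective f) ∧
    ¬ (∀ (Q : Type) [Group Q] [Finite Q],
        (∃ f : FigEightGroup →* Q, Function.Surjective f) ↔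
        (∃ g : TrefoilGroup →* Q, Function.Surjective g)) := by
  refine ⟨⟨figHom, figHom_surj⟩, no_trefoil_surj, fun hall => ?_⟩
  exact no_trefoil_surj ((hall (DihedralGroup 5)).mp ⟨figHom, figHom_surj⟩)
end
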